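/- Let f : [0,1] → [0,1]² be continuous with f(0) = (0,0) and f(1) = (1,1). Let a, r, s, ε ∈ ℚ with 0 < r < s, cl B(f(a), s) ⊆ (0,1)² and ε > 0. Then there exist rationals r̄, s̄ with r < r̄ < s̄ < s and open intervals I, J with rational endpoints such that K_{a,s̄} ∪ K_{a,r̄} ⊆ I, L_{a,r̄} ∪ L_{a,s̄} ⊆ J, length(I) < ε and length(J) < ε. -/

import Mathlib

open Set

noncomputable section

/-- The Euclidean plane. -/
abbrev E2 := EuclideanSpace ℝ (Fin 2)

/-- The point `(x, y)` of the Euclidean plane. -/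
def pt (x y : ℝ) : E2 := WithLp.toLp 2 ![x, y]

/-- The closed unit square `[0,1]²`. -/
def unitSq : Set E2 := {p | p 0 ∈ Icc (0:ℝ) 1 ∧ p 1 ∈ Icc (0:ℝ) 1}

/-- The open unit square `(0,1)²`. -/
def openUnitSq : Set E2 := {p | p 0 ∈ Ioo (0:ℝ) 1 ∧ p 1 ∈ Ioo (0:ℝ) 1}

/-- `p_{a,r} = inf{ b ∈ (0,a) ∩ ℚ : f([b,a]) ⊆ B(f(a),r) }`. -/
def pTime (f : ℝ → E2) (a r : ℝ) : ℝ :=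
  sInf {b : ℝ | (∃ q : ℚ, (q:ℝ) = b) ∧ b ∈ Ioo 0 a ∧
    MapsTo f (Icc b a) (Metric.ball (f a) r)}

/-- `q_{a,r} = sup{ b ∈ (a,1) ∩ ℚ : f([a,b]) ⊆ B(f(a),r) }`. -/
def qTime (f : ℝ → E2) (a r : ℝ) : ℝ :=
  sSup {b : ℝ | (∃ q : ℚ, (q:ℝ) = b) ∧ b ∈ Ioo a 1 ∧
    MapsTo f (Icc a b) (Metric.ball (f a) r)}

/-- `p'_{a,r} = sup{ b ∈ (0,a) ∩ ℚ : f(b) ∉ cl B(f(a),r) }`. -/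
def pTime' (f : ℝ → E2) (a r : ℝ) : ℝ :=
  sSup {b : ℝ | (∃ q : ℚ, (q:ℝ) = b) ∧ b ∈ Ioo 0 a ∧
    f b ∉ closure (Metric.ball (f a) r)}

/-- `q'_{a,r} = inf{ b ∈ (a,1) ∩ ℚ : f(b) ∉ cl B(f(a),r) }`. -/
def qTime' (f : ℝ → E2) (a r : ℝ) : ℝ :=
  sInf {b : ℝ | (∃ q : ℚ, (q:ℝ) = b) ∧ b ∈ Ioo a 1 ∧
    f b ∉ closure (Metric.ball (f a) r)}

/-- `K_{a,r} = [p'_{a,r}, p_{a,r}]`. -/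
def Kint (f : ℝ → E2) (a r : ℝ) : Set ℝ := Icc (pTime' f a r) (pTime f a r)

/-- `L_{a,r} = [q_{a,r}, q'_{a,r}]`. -/
def Lint (f : ℝ → E2) (a r : ℝ) : Set ℝ := Icc (qTime f a r) (qTime' f a r)

namespace ST

def Pset (f : ℝ → E2) (a t : ℝ) : Set ℝ :=
  {b : ℝ | (∃ q : ℚ, (q:ℝ) = b) ∧ b ∈ Ioo 0 a ∧ MapsTo f (Icc b a) (Metric.ball (f a) t)}

def P'set (f : ℝ → E2) (a t : ℝ) : Set ℝ :=
  {b : ℝ | (∃ q : ℚ, (q:ℝ) = b) ∧ b ∈ Ioo 0 a ∧ f b ∉ closure (Metric.ball (f a) t)}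

def Qset (f : ℝ → E2) (a t : ℝ) : Set ℝ :=
  {b : ℝ | (∃ q : ℚ, (q:ℝ) = b) ∧ b ∈ Ioo a 1 ∧ MapsTo f (Icc a b) (Metric.ball (f a) t)}

def Q'set (f : ℝ → E2) (a t : ℝ) : Set ℝ :=
  {b : ℝ | (∃ q : ℚ, (q:ℝ) = b) ∧ b ∈ Ioo a 1 ∧ f b ∉ closure (Metric.ball (f a) t)}

variable {f : ℝ → E2} {a s : ℝ}

lemma cont_open (hfc : ContinuousOn f (Icc 0 1))
    {x0 : ℝ} (hx0 : x0 ∈ Icc (0:ℝ) 1) {U : Set E2} (hU : IsOpen U) (hfx : f x0 ∈ U) :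
    ∃ δ > 0, ∀ y ∈ Icc (0:ℝ) 1, |y - x0| < δ → f y ∈ U := by
  have h := hfc x0 hx0 (hU.mem_nhds hfx)
  rw [Filter.mem_map, Metric.mem_nhdsWithin_iff] at h
  obtain ⟨δ, hδ, hsub⟩ := h
  exact ⟨δ, hδ, fun y hy hyd =>
    hsub ⟨by simpa [Metric.mem_ball, Real.dist_eq] using hyd, hy⟩⟩

lemma pt00_notin : pt 0 0 ∉ openUnitSq := by
  simp [pt, openUnitSq]

lemma pt11_notin : pt 1 1 ∉ openUnitSq := by
  simp [pt, openUnitSq]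

lemma Pset_nonempty (hfc : ContinuousOn f (Icc 0 1)) (ha : a ∈ Ioo (0:ℝ) 1)
    {t : ℝ} (ht : 0 < t) : (Pset f a t).Nonempty := by
  obtain ⟨δ, hδ0, hδ⟩ := cont_open hfc ⟨ha.1.le, ha.2.le⟩
    Metric.isOpen_ball (Metric.mem_ball_self ht)
  obtain ⟨b, hb1, hb2⟩ := exists_rat_btwn (show max 0 (a - δ) < a from
    max_lt ha.1 (by linarith))
  have hb0 : (0:ℝ) < b := (le_max_left _ _).trans_lt hb1
  refine ⟨b, ⟨b, rfl⟩, ⟨hb0, hb2⟩, fun x hx => ?_⟩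
  apply hδ x ⟨hb0.le.trans hx.1, hx.2.trans ha.2.le⟩
  rw [abs_sub_lt_iff]
  have := (le_max_right 0 (a - δ)).trans_lt hb1
  constructor <;> [linarith [hx.2]; linarith [hx.1]]

lemma P'set_nonempty (hfc : ContinuousOn f (Icc 0 1)) (hf0 : f 0 = pt 0 0)
    (ha : a ∈ Ioo (0:ℝ) 1) (hball : closure (Metric.ball (f a) s) ⊆ openUnitSq)
    {t : ℝ} (hts : t ≤ s) : (P'set f a t).Nonempty := by
  have hsub : closure (Metric.ball (f a) t) ⊆ openUnitSq :=
    (closure_mono (Metric.ball_subset_ball hts)).trans hball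
  have hout : f 0 ∉ closure (Metric.ball (f a) t) := by
    rw [hf0]; exact fun h => pt00_notin (hsub h)
  obtain ⟨δ, hδ0, hδ⟩ := cont_open hfc ⟨le_refl 0, zero_le_one⟩
    isClosed_closure.isOpen_compl hout
  obtain ⟨b, hb1, hb2⟩ := exists_rat_btwn (show (0:ℝ) < min a δ from lt_min ha.1 hδ0)
  refine ⟨b, ⟨b, rfl⟩, ⟨hb1, hb2.trans_le (min_le_left _ _)⟩, ?_⟩
  exact hδ b ⟨hb1.le, (hb2.trans_le (min_le_left _ _)).le.trans ha.2.le⟩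
    (by rw [abs_sub_lt_iff]; constructor <;>
      [linarith [hb2.trans_le (min_le_right a δ)]; linarith])

lemma Qset_nonempty (hfc : ContinuousOn f (Icc 0 1)) (ha : a ∈ Ioo (0:ℝ) 1)
    {t : ℝ} (ht : 0 < t) : (Qset f a t).Nonempty := by
  obtain ⟨δ, hδ0, hδ⟩ := cont_open hfc ⟨ha.1.le, ha.2.le⟩
    Metric.isOpen_ball (Metric.mem_ball_self ht)
  obtain ⟨b, hb1, hb2⟩ := exists_rat_btwn (show a < min 1 (a + δ) from
    lt_min ha.2 (by linarith))
  have hb1' : (b:ℝ) < 1 := hb2.trans_le (min_le_left _ _)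
  refine ⟨b, ⟨b, rfl⟩, ⟨hb1, hb1'⟩, fun x hx => ?_⟩
  apply hδ x ⟨ha.1.le.trans hx.1, hx.2.trans hb1'.le⟩
  rw [abs_sub_lt_iff]
  have := hb2.trans_le (min_le_right 1 (a + δ))
  constructor <;> [linarith [hx.2]; linarith [hx.1]]

lemma Q'set_nonempty (hfc : ContinuousOn f (Icc 0 1)) (hf1 : f 1 = pt 1 1)
    (ha : a ∈ Ioo (0:ℝ) 1) (hball : closure (Metric.ball (f a) s) ⊆ openUnitSq)
    {t : ℝ} (hts : t ≤ s) : (Q'set f a t).Nonempty := by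
  have hsub : closure (Metric.ball (f a) t) ⊆ openUnitSq :=
    (closure_mono (Metric.ball_subset_ball hts)).trans hball
  have hout : f 1 ∉ closure (Metric.ball (f a) t) := by
    rw [hf1]; exact fun h => pt11_notin (hsub h)
  obtain ⟨δ, hδ0, hδ⟩ := cont_open hfc ⟨zero_le_one, le_refl 1⟩
    isClosed_closure.isOpen_compl hout
  obtain ⟨b, hb1, hb2⟩ := exists_rat_btwn (show max a (1 - δ) < 1 from
    max_lt ha.2 (by linarith))
  have hba : a < (b:ℝ) := (le_max_left _ _).trans_lt hb1
  refine ⟨b, ⟨b, rfl⟩, ⟨hba, hb2⟩, ?_⟩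
  exact hδ b ⟨(ha.1.trans hba).le, hb2.le⟩
    (by rw [abs_sub_lt_iff]; constructor <;>
      [linarith; linarith [(le_max_right a (1 - δ)).trans_lt hb1]])

lemma Pset_bddBelow : BddBelow (Pset f a t) := ⟨0, fun x hx => hx.2.1.1.le⟩
lemma P'set_bddAbove : BddAbove (P'set f a t) := ⟨a, fun x hx => hx.2.1.2.le⟩
lemma Qset_bddAbove : BddAbove (Qset f a t) := ⟨1, fun x hx => hx.2.1.2.le⟩
lemma Q'set_bddBelow : BddBelow (Q'set f a t) := ⟨a, fun x hx => hx.2.1.1.le⟩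

lemma pTime_mem (hfc : ContinuousOn f (Icc 0 1)) (ha : a ∈ Ioo (0:ℝ) 1)
    {t : ℝ} (ht : 0 < t) : sInf (Pset f a t) ∈ Icc (0:ℝ) a := by
  obtain ⟨b, hb⟩ := Pset_nonempty hfc ha ht
  exact ⟨le_csInf ⟨b, hb⟩ fun x hx => hx.2.1.1.le,
    (csInf_le Pset_bddBelow hb).trans hb.2.1.2.le⟩

lemma pTime'_mem (hfc : ContinuousOn f (Icc 0 1)) (hf0 : f 0 = pt 0 0)
    (ha : a ∈ Ioo (0:ℝ) 1) (hball : closure (Metric.ball (f a) s) ⊆ openUnitSq)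
    {t : ℝ} (hts : t ≤ s) : sSup (P'set f a t) ∈ Icc (0:ℝ) a := by
  obtain ⟨b, hb⟩ := P'set_nonempty hfc hf0 ha hball hts
  exact ⟨hb.2.1.1.le.trans (le_csSup P'set_bddAbove hb),
    csSup_le ⟨b, hb⟩ fun x hx => hx.2.1.2.le⟩

lemma qTime_mem (hfc : ContinuousOn f (Icc 0 1)) (ha : a ∈ Ioo (0:ℝ) 1)
    {t : ℝ} (ht : 0 < t) : sSup (Qset f a t) ∈ Icc a (1:ℝ) := by
  obtain ⟨b, hb⟩ := Qset_nonempty hfc ha ht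
  exact ⟨hb.2.1.1.le.trans (le_csSup Qset_bddAbove hb),
    csSup_le ⟨b, hb⟩ fun x hx => hx.2.1.2.le⟩

lemma qTime'_mem (hfc : ContinuousOn f (Icc 0 1)) (hf1 : f 1 = pt 1 1)
    (ha : a ∈ Ioo (0:ℝ) 1) (hball : closure (Metric.ball (f a) s) ⊆ openUnitSq)
    {t : ℝ} (hts : t ≤ s) : sInf (Q'set f a t) ∈ Icc a (1:ℝ) := by
  obtain ⟨b, hb⟩ := Q'set_nonempty hfc hf1 ha hball hts
  exact ⟨le_csInf ⟨b, hb⟩ fun x hx => hx.2.1.1.le,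
    (csInf_le Q'set_bddBelow hb).trans hb.2.1.2.le⟩

lemma same_p (hfc : ContinuousOn f (Icc 0 1)) (ha : a ∈ Ioo (0:ℝ) 1)
    {t : ℝ} (ht : 0 < t) (hA : (P'set f a t).Nonempty) :
    sSup (P'set f a t) ≤ sInf (Pset f a t) := by
  apply csSup_le hA
  intro b hb
  apply le_csInf (Pset_nonempty hfc ha ht)
  intro b' hb'
  by_contra hcon
  push_neg at hcon
  exact hb.2.2 (subset_closure (hb'.2.2 ⟨hcon.le, hb.2.1.2.le⟩))

lemma same_q (hfc : ContinuousOn f (Icc 0 1)) (ha : a ∈ Ioo (0:ℝ) 1)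
    {t : ℝ} (ht : 0 < t) (hA : (Q'set f a t).Nonempty) :
    sSup (Qset f a t) ≤ sInf (Q'set f a t) := by
  apply csSup_le (Qset_nonempty hfc ha ht)
  intro b hb
  apply le_csInf hA
  intro b' hb'
  by_contra hcon
  push_neg at hcon
  exact hb'.2.2 (subset_closure (hb.2.2 ⟨hb'.2.1.1.le, hcon.le⟩))

lemma bridge_p (hfc : ContinuousOn f (Icc 0 1)) (hf0 : f 0 = pt 0 0)
    (ha : a ∈ Ioo (0:ℝ) 1) (hball : closure (Metric.ball (f a) s) ⊆ openUnitSq)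
    {t1 t2 : ℝ} (ht1 : 0 < t1) (h12 : t1 < t2) (ht1s : t1 ≤ s) :
    sInf (Pset f a t2) ≤ sSup (P'set f a t1) := by
  have hA : (P'set f a t1).Nonempty := P'set_nonempty hfc hf0 ha hball ht1s
  obtain ⟨b0, hb0⟩ := hA
  set m := sSup (P'set f a t1) with hmdef
  have hm0 : 0 < m := lt_of_lt_of_le hb0.2.1.1 (le_csSup P'set_bddAbove hb0)
  obtain ⟨δ, hδ0, hδ⟩ := cont_open hfc ⟨ha.1.le, ha.2.le⟩
    Metric.isOpen_ball (Metric.mem_ball_self ht1)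
  have hma : m < a := by
    have hub : ∀ b ∈ P'set f a t1, b ≤ a - δ := by
      intro b hb
      by_contra hcon
      push_neg at hcon
      have hfb : f b ∈ Metric.ball (f a) t1 := by
        apply hδ b ⟨hb.2.1.1.le, hb.2.1.2.le.trans ha.2.le⟩
        rw [abs_sub_lt_iff]
        constructor <;> [linarith [hb.2.1.2]; linarith]
      exact hb.2.2 (subset_closure hfb)
    have := csSup_le ⟨b0, hb0⟩ hub
    rw [← hmdef] at this
    linarith
  have key : ∀ x : ℝ, m < x → x ≤ a → f x ∈ closure (Metric.ball (f a) t1) := by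
    intro x hmx hxa
    rcases eq_or_lt_of_le hxa with rfl | hxa'
    · exact subset_closure (Metric.mem_ball_self ht1)
    · by_contra hout
      have hx01 : x ∈ Icc (0:ℝ) 1 := ⟨(hm0.trans hmx).le, hxa'.le.trans ha.2.le⟩
      obtain ⟨δx, hδx0, hδx⟩ := cont_open hfc hx01 isClosed_closure.isOpen_compl hout
      obtain ⟨b, hb1, hb2⟩ := exists_rat_btwn (show max m (x - δx) < x from
        max_lt hmx (by linarith))
      have hbm : m < (b:ℝ) := (le_max_left _ _).trans_lt hb1
      have hbmem : (b:ℝ) ∈ P'set f a t1 := by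
        refine ⟨⟨b, rfl⟩, ⟨hm0.trans hbm, hb2.trans hxa'⟩, ?_⟩
        exact hδx b ⟨(hm0.trans hbm).le, ((hb2.trans hxa').le.trans ha.2.le)⟩
          (by rw [abs_sub_lt_iff]
              constructor <;>
                [linarith; linarith [(le_max_right m (x - δx)).trans_lt hb1]])
      exact absurd (le_csSup P'set_bddAbove hbmem) (not_le.mpr hbm)
  apply le_of_forall_pos_le_add
  intro η hη
  obtain ⟨b, hb1, hb2⟩ := exists_rat_btwn (show m < min (m + η) a from
    lt_min (by linarith) hma)
  have hbmem : (b:ℝ) ∈ Pset f a t2 := by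
    refine ⟨⟨b, rfl⟩, ⟨hm0.trans hb1, hb2.trans_le (min_le_right _ _)⟩, fun x hx => ?_⟩
    exact Metric.closedBall_subset_ball h12
      (Metric.closure_ball_subset_closedBall (key x (hb1.trans_le hx.1) hx.2))
  calc sInf (Pset f a t2) ≤ b := csInf_le Pset_bddBelow hbmem
  _ ≤ m + η := (hb2.trans_le (min_le_left _ _)).le

lemma bridge_q (hfc : ContinuousOn f (Icc 0 1)) (hf1 : f 1 = pt 1 1)
    (ha : a ∈ Ioo (0:ℝ) 1) (hball : closure (Metric.ball (f a) s) ⊆ openUnitSq)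
    {t1 t2 : ℝ} (ht1 : 0 < t1) (h12 : t1 < t2) (ht1s : t1 ≤ s) :
    sInf (Q'set f a t1) ≤ sSup (Qset f a t2) := by
  have hA : (Q'set f a t1).Nonempty := Q'set_nonempty hfc hf1 ha hball ht1s
  obtain ⟨b0, hb0⟩ := hA
  set m := sInf (Q'set f a t1) with hmdef
  have hm1 : m < 1 := lt_of_le_of_lt (csInf_le Q'set_bddBelow hb0) hb0.2.1.2
  obtain ⟨δ, hδ0, hδ⟩ := cont_open hfc ⟨ha.1.le, ha.2.le⟩
    Metric.isOpen_ball (Metric.mem_ball_self ht1)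
  have hma : a < m := by
    have hlb : ∀ b ∈ Q'set f a t1, a + δ ≤ b := by
      intro b hb
      by_contra hcon
      push_neg at hcon
      have hfb : f b ∈ Metric.ball (f a) t1 := by
        apply hδ b ⟨(ha.1.trans hb.2.1.1).le, hb.2.1.2.le⟩
        rw [abs_sub_lt_iff]
        constructor <;> [linarith; linarith [hb.2.1.1]]
      exact hb.2.2 (subset_closure hfb)
    have := le_csInf ⟨b0, hb0⟩ hlb
    rw [← hmdef] at this
    linarith
  have key : ∀ x : ℝ, a ≤ x → x < m → f x ∈ closure (Metric.ball (f a) t1) := by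
    intro x hax hxm
    rcases eq_or_lt_of_le hax with rfl | hax'
    · exact subset_closure (Metric.mem_ball_self ht1)
    · by_contra hout
      have hx01 : x ∈ Icc (0:ℝ) 1 := ⟨(ha.1.trans hax').le, (hxm.trans hm1).le⟩
      obtain ⟨δx, hδx0, hδx⟩ := cont_open hfc hx01 isClosed_closure.isOpen_compl hout
      obtain ⟨b, hb1, hb2⟩ := exists_rat_btwn (show x < min m (x + δx) from
        lt_min hxm (by linarith))
      have hbm : (b:ℝ) < m := hb2.trans_le (min_le_left _ _)
      have hbmem : (b:ℝ) ∈ Q'set f a t1 := by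
        refine ⟨⟨b, rfl⟩, ⟨hax'.trans hb1, hbm.trans hm1⟩, ?_⟩
        exact hδx b ⟨(ha.1.trans (hax'.trans hb1)).le, (hbm.trans hm1).le⟩
          (by rw [abs_sub_lt_iff]
              constructor <;>
                [linarith [hb2.trans_le (min_le_right m (x + δx))]; linarith])
      exact absurd (csInf_le Q'set_bddBelow hbmem) (not_le.mpr hbm)
  apply le_of_forall_pos_le_add
  intro η hη
  obtain ⟨b, hb1, hb2⟩ := exists_rat_btwn (show max a (m - η) < m from
    max_lt hma (by linarith))
  have hba : a < (b:ℝ) := (le_max_left _ _).trans_lt hb1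
  have hbmem : (b:ℝ) ∈ Qset f a t2 := by
    refine ⟨⟨b, rfl⟩, ⟨hba, hb2.trans hm1⟩, fun x hx => ?_⟩
    exact Metric.closedBall_subset_ball h12
      (Metric.closure_ball_subset_closedBall (key x hx.1 (lt_of_le_of_lt hx.2 hb2)))
  have hstep : m ≤ (b:ℝ) + η := by
    have := (le_max_right a (m - η)).trans_lt hb1
    linarith
  calc m ≤ (b:ℝ) + η := hstep
  _ ≤ sSup (Qset f a t2) + η := by linarith [le_csSup Qset_bddAbove hbmem]

end ST


/-- Between radii `r < s` one can find radii `r̄ < s̄` whose exit intervals are trapped in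
arbitrarily short rational intervals. -/
theorem small_trapping_intervals (f : ℝ → E2)
    (hfc : ContinuousOn f (Icc 0 1)) (hfm : MapsTo f (Icc 0 1) unitSq)
    (hf0 : f 0 = pt 0 0) (hf1 : f 1 = pt 1 1)
    (a r s ε : ℚ) (ha : (a:ℝ) ∈ Ioo (0:ℝ) 1) (hr : (0:ℝ) < r) (hrs : (r:ℝ) < s)
    (hball : closure (Metric.ball (f a) s) ⊆ openUnitSq) (hε : (0:ℝ) < ε) :
    ∃ rb sb : ℚ, r < rb ∧ rb < sb ∧ sb < s ∧
      ∃ c₁ d₁ c₂ d₂ : ℚ,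
        Kint f a sb ∪ Kint f a rb ⊆ Ioo (c₁:ℝ) d₁ ∧ (d₁:ℝ) - c₁ < ε ∧
        Lint f a rb ∪ Lint f a sb ⊆ Ioo (c₂:ℝ) d₂ ∧ (d₂:ℝ) - c₂ < ε := by
  classical
  have hrsQ : r < s := by exact_mod_cast hrs
  have hrQ : (0:ℚ) < r := by exact_mod_cast hr
  have hεR : (0:ℝ) < (ε:ℝ) := hε
  have hsrQ : (0:ℚ) < s - r := by linarith
  have pT : ∀ t : ℝ, pTime f ↑a t = sInf (ST.Pset f (↑a) t) := fun _ => rfl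
  have pT' : ∀ t : ℝ, pTime' f ↑a t = sSup (ST.P'set f (↑a) t) := fun _ => rfl
  have qT : ∀ t : ℝ, qTime f ↑a t = sSup (ST.Qset f (↑a) t) := fun _ => rfl
  have qT' : ∀ t : ℝ, qTime' f ↑a t = sInf (ST.Q'set f (↑a) t) := fun _ => rfl
  obtain ⟨N, hN4⟩ : ∃ N : ℕ, (4:ℝ)/(ε:ℝ) < N := by
    refine ⟨⌈(4:ℝ)/(ε:ℝ)⌉₊ + 1, ?_⟩
    have h1 := Nat.le_ceil ((4:ℝ)/(ε:ℝ))
    push_cast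
    linarith
  have hN2 : (2:ℝ) < (N:ℝ) * ((ε:ℝ)/2) := by
    rw [div_lt_iff₀ hεR] at hN4
    nlinarith
  obtain ⟨u, hu_gt, hu_mono, hu_lt_s⟩ :
      ∃ u : ℕ → ℚ, (∀ i : ℕ, r < u i) ∧ (∀ i j : ℕ, i < j → u i < u j) ∧
        (∀ i : ℕ, i ≤ N → u i < s) := by
    have hN2Q : (0:ℚ) < (N:ℚ) + 2 := by positivity
    refine ⟨fun i => r + (s - r) * (i + 1) / (N + 2), ?_, ?_, ?_⟩
    · intro i
      have h1 : (0:ℚ) < (s - r) * ((i:ℚ) + 1) / ((N:ℚ) + 2) :=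
        div_pos (mul_pos hsrQ (by positivity)) hN2Q
      simp only
      linarith
    · intro i j hij
      have h1 : ((i:ℚ) + 1) < ((j:ℚ) + 1) := by exact_mod_cast Nat.succ_lt_succ hij
      have h2 : (s - r) * ((i:ℚ) + 1) < (s - r) * ((j:ℚ) + 1) :=
        mul_lt_mul_of_pos_left h1 hsrQ
      have h3 := (div_lt_div_iff_of_pos_right hN2Q).mpr h2
      simp only
      linarith
    · intro i hiN
      have h0 : (i:ℚ) ≤ (N:ℚ) := by exact_mod_cast hiN
      have h1 : ((i:ℚ) + 1) < ((N:ℚ) + 2) := by linarith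
      have h2 : (s - r) * ((i:ℚ) + 1) / ((N:ℚ) + 2) < s - r := by
        rw [div_lt_iff₀ hN2Q]
        exact mul_lt_mul_of_pos_left h1 hsrQ
      simp only
      linarith
  have huR_pos : ∀ i : ℕ, (0:ℝ) < ((u i : ℚ) : ℝ) := by
    intro i
    have h := hrQ.trans (hu_gt i)
    exact_mod_cast h
  have huR_le_s : ∀ i : ℕ, i ≤ N → ((u i : ℚ) : ℝ) ≤ (s:ℝ) := by
    intro i hi
    have h := (hu_lt_s i hi).le
    exact_mod_cast h
  obtain ⟨P, hPdef⟩ : ∃ P : ℕ → ℝ, ∀ j, P j = pTime f ↑a ↑(u j) := ⟨_, fun _ => rfl⟩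
  obtain ⟨Q, hQdef⟩ : ∃ Q : ℕ → ℝ, ∀ j, Q j = qTime f ↑a ↑(u j) := ⟨_, fun _ => rfl⟩
  have hPmem : ∀ i : ℕ, P i ∈ Icc (0:ℝ) (a:ℝ) := by
    intro i
    rw [hPdef, pT]
    exact ST.pTime_mem hfc ha (huR_pos i)
  have hQmem : ∀ i : ℕ, Q i ∈ Icc (a:ℝ) (1:ℝ) := by
    intro i
    rw [hQdef, qT]
    exact ST.qTime_mem hfc ha (huR_pos i)
  have hstep : ∀ i : ℕ, i < N → P (i+1) ≤ P i ∧ Q i ≤ Q (i+1) := by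
    intro i hi
    have hpos := huR_pos i
    have hles := huR_le_s i (Nat.le_of_lt hi)
    have hlt : ((u i : ℚ):ℝ) < ((u (i+1) : ℚ):ℝ) := by
      exact_mod_cast hu_mono i (i+1) (Nat.lt_succ_self i)
    constructor
    · simp only [hPdef, pT]
      calc sInf (ST.Pset f ↑a ↑(u (i+1))) ≤ sSup (ST.P'set f ↑a ↑(u i)) :=
            ST.bridge_p hfc hf0 ha hball hpos hlt hles
      _ ≤ sInf (ST.Pset f ↑a ↑(u i)) :=
            ST.same_p hfc ha hpos (ST.P'set_nonempty hfc hf0 ha hball hles)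
    · simp only [hQdef, qT]
      calc sSup (ST.Qset f ↑a ↑(u i)) ≤ sInf (ST.Q'set f ↑a ↑(u i)) :=
            ST.same_q hfc ha hpos (ST.Q'set_nonempty hfc hf1 ha hball hles)
      _ ≤ sSup (ST.Qset f ↑a ↑(u (i+1))) :=
            ST.bridge_q hfc hf1 ha hball hpos hlt hles
  have hex : ∃ i, i < N ∧ (P i - P (i+1)) + (Q (i+1) - Q i) < (ε:ℝ)/2 := by
    by_contra hcon
    push_neg at hcon
    have hsum : (N:ℝ) * ((ε:ℝ)/2) ≤ (P 0 - P N) + (Q N - Q 0) := by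
      calc (N:ℝ) * ((ε:ℝ)/2) = ∑ _i ∈ Finset.range N, (ε:ℝ)/2 := by
            rw [Finset.sum_const, Finset.card_range, nsmul_eq_mul]
      _ ≤ ∑ i ∈ Finset.range N, ((P i - P (i+1)) + (Q (i+1) - Q i)) :=
            Finset.sum_le_sum fun i hi => hcon i (Finset.mem_range.mp hi)
      _ = (P 0 - P N) + (Q N - Q 0) := by
            rw [Finset.sum_add_distrib, Finset.sum_range_sub' P, Finset.sum_range_sub Q]
    have h1 := hPmem 0
    have h2 := hPmem N
    have h3 := hQmem 0
    have h4 := hQmem N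
    simp only [mem_Icc] at h1 h2 h3 h4
    have hle2 : (P 0 - P N) + (Q N - Q 0) ≤ 2 := by
      have := ha.1.le
      have := ha.2.le
      linarith
    linarith
  obtain ⟨i, hiN, hD⟩ := hex
  obtain ⟨hPc, hQc⟩ := hstep i hiN
  have hPd : P i - P (i+1) < (ε:ℝ)/2 := by linarith
  have hQd : Q (i+1) - Q i < (ε:ℝ)/2 := by linarith
  have hui1 : u i < u (i+1) := hu_mono i (i+1) (Nat.lt_succ_self i)
  obtain ⟨rb, sb, h1, h2, h3⟩ :
      ∃ rb sb : ℚ, u i < rb ∧ rb < sb ∧ sb < u (i+1) :=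
    ⟨(2 * u i + u (i+1)) / 3, (u i + 2 * u (i+1)) / 3,
      by linarith, by linarith, by linarith⟩
  have hrrb : r < rb := (hu_gt i).trans h1
  have hsbs : sb < s := h3.trans (hu_lt_s (i+1) (Nat.succ_le_of_lt hiN))
  have hrbpos : (0:ℝ) < (rb:ℝ) := by exact_mod_cast hrQ.trans hrrb
  have hsbpos : (0:ℝ) < (sb:ℝ) := by exact_mod_cast hrQ.trans (hrrb.trans h2)
  have hrbsR : (rb:ℝ) ≤ (s:ℝ) := by exact_mod_cast (h2.trans hsbs).le
  have hsbsR : (sb:ℝ) ≤ (s:ℝ) := by exact_mod_cast hsbs.le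
  have huipos := huR_pos i
  have huiles := huR_le_s i (Nat.le_of_lt hiN)
  have hui_rb : ((u i : ℚ):ℝ) < (rb:ℝ) := by exact_mod_cast h1
  have hrb_sb : (rb:ℝ) < (sb:ℝ) := by exact_mod_cast h2
  have hsb_ui1 : (sb:ℝ) < ((u (i+1) : ℚ):ℝ) := by exact_mod_cast h3
  have hrb_ui1 : (rb:ℝ) < ((u (i+1) : ℚ):ℝ) := by exact_mod_cast h2.trans h3
  have hb1 : P (i+1) ≤ pTime' f ↑a ↑sb := by
    rw [hPdef, pT, pT']
    exact ST.bridge_p hfc hf0 ha hball hsbpos hsb_ui1 hsbsR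
  have hb2 : P (i+1) ≤ pTime' f ↑a ↑rb := by
    rw [hPdef, pT, pT']
    exact ST.bridge_p hfc hf0 ha hball hrbpos hrb_ui1 hrbsR
  have hsame : pTime' f ↑a ↑(u i) ≤ P i := by
    rw [hPdef, pT, pT']
    exact ST.same_p hfc ha huipos (ST.P'set_nonempty hfc hf0 ha hball huiles)
  have hb3 : pTime f ↑a ↑sb ≤ P i := by
    have : pTime f ↑a ↑sb ≤ pTime' f ↑a ↑(u i) := by
      rw [pT, pT']
      exact ST.bridge_p hfc hf0 ha hball huipos (hui_rb.trans hrb_sb) huiles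
    linarith
  have hb4 : pTime f ↑a ↑rb ≤ P i := by
    have : pTime f ↑a ↑rb ≤ pTime' f ↑a ↑(u i) := by
      rw [pT, pT']
      exact ST.bridge_p hfc hf0 ha hball huipos hui_rb huiles
    linarith
  have hb5 : qTime' f ↑a ↑sb ≤ Q (i+1) := by
    rw [hQdef, qT, qT']
    exact ST.bridge_q hfc hf1 ha hball hsbpos hsb_ui1 hsbsR
  have hb6 : qTime' f ↑a ↑rb ≤ Q (i+1) := by
    rw [hQdef, qT, qT']
    exact ST.bridge_q hfc hf1 ha hball hrbpos hrb_ui1 hrbsR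
  have hsameq : Q i ≤ qTime' f ↑a ↑(u i) := by
    rw [hQdef, qT, qT']
    exact ST.same_q hfc ha huipos (ST.Q'set_nonempty hfc hf1 ha hball huiles)
  have hb7 : Q i ≤ qTime f ↑a ↑rb := by
    have : qTime' f ↑a ↑(u i) ≤ qTime f ↑a ↑rb := by
      rw [qT, qT']
      exact ST.bridge_q hfc hf1 ha hball huipos hui_rb huiles
    linarith
  have hb8 : Q i ≤ qTime f ↑a ↑sb := by
    have : qTime' f ↑a ↑(u i) ≤ qTime f ↑a ↑sb := by
      rw [qT, qT']
      exact ST.bridge_q hfc hf1 ha hball huipos (hui_rb.trans hrb_sb) huiles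
    linarith
  obtain ⟨c₁, hc₁a, hc₁b⟩ := exists_rat_btwn
    (show P (i+1) - (ε:ℝ)/4 < P (i+1) by linarith)
  obtain ⟨d₁, hd₁a, hd₁b⟩ := exists_rat_btwn
    (show P i < P i + (ε:ℝ)/4 by linarith)
  obtain ⟨c₂, hc₂a, hc₂b⟩ := exists_rat_btwn
    (show Q i - (ε:ℝ)/4 < Q i by linarith)
  obtain ⟨d₂, hd₂a, hd₂b⟩ := exists_rat_btwn
    (show Q (i+1) < Q (i+1) + (ε:ℝ)/4 by linarith)
  refine ⟨rb, sb, hrrb, h2, hsbs, c₁, d₁, c₂, d₂, ?_, by linarith, ?_, by linarith⟩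
  · rintro x (hx | hx)
    · have hx' : pTime' f ↑a ↑sb ≤ x ∧ x ≤ pTime f ↑a ↑sb := hx
      exact ⟨by linarith [hx'.1], by linarith [hx'.2]⟩
    · have hx' : pTime' f ↑a ↑rb ≤ x ∧ x ≤ pTime f ↑a ↑rb := hx
      exact ⟨by linarith [hx'.1], by linarith [hx'.2]⟩
  · rintro x (hx | hx)
    · have hx' : qTime f ↑a ↑rb ≤ x ∧ x ≤ qTime' f ↑a ↑rb := hx
      exact ⟨by linarith [hx'.1], by linarith [hx'.2]⟩
    · have hx' : qTime f ↑a ↑sb ≤ x ∧ x ≤ qTime' f ↑a ↑sb := hx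
      exact ⟨by linarith [hx'.1], by linarith [hx'.2]⟩
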